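/- Let ρₙ, ρ be probability densities on (Ω,A,m) satisfying ∫|ρₙ − ρ| dm → 0, and suppose for some 0 < p < 1 < q and constant A that ∫ρₙᵖ dm ≤ A, ∫ρᵖ dm ≤ A, ∫ρₙ^q dm ≤ A, ∫ρ^q dm ≤ A for all n. Then the Shannon entropies converge: −∫ρₙ log ρₙ dm → −∫ρ log ρ dm. -/

import Mathlib

open MeasureTheory Filter

private lemma log_le_rpow_div {t a : ℝ} (ht : 0 < t) (ha : 0 < a) :
    Real.log t ≤ t ^ a / a := by
  have h1 : Real.log (t ^ a) ≤ t ^ a - 1 := Real.log_le_sub_one_of_pos (Real.rpow_pos_of_pos ht a)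
  rw [Real.log_rpow ht] at h1
  have h2 : a * Real.log t ≤ t ^ a := by linarith [Real.rpow_pos_of_pos ht a]
  rw [div_eq_inv_mul, ← mul_le_mul_iff_right₀ ha, ← mul_assoc, mul_inv_cancel₀ ha.ne', one_mul]
  linarith

private lemma neg_rpow_div_le_log {t a : ℝ} (ht : 0 < t) (ha : 0 < a) :
    -(t ^ (-a) / a) ≤ Real.log t := by
  have h := log_le_rpow_div (t := t⁻¹) (a := a) (by positivity) ha
  rw [Real.log_inv, Real.inv_rpow ht.le, ← Real.rpow_neg ht.le] at h
  linarith

private lemma rpow_add_le' {a b r : ℝ} (ha : 0 ≤ a) (hb : 0 ≤ b) (hr0 : 0 ≤ r) (hr1 : r ≤ 1) :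
    (a + b) ^ r ≤ a ^ r + b ^ r := by
  have := NNReal.rpow_add_le_add_rpow (a.toNNReal) (b.toNNReal) hr0 hr1
  have h2 : ((a.toNNReal + b.toNNReal : NNReal) : ℝ) ^ r
      ≤ ((a.toNNReal : ℝ)) ^ r + ((b.toNNReal : ℝ)) ^ r := by
    rw [← NNReal.coe_rpow, ← NNReal.coe_rpow, ← NNReal.coe_rpow, ← NNReal.coe_add]
    exact_mod_cast this
  rwa [NNReal.coe_add, Real.coe_toNNReal a ha, Real.coe_toNNReal b hb] at h2

private lemma rpow_sub_le_rpow_sub {x y r : ℝ} (hx : 0 ≤ x) (hxy : x ≤ y)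
    (hr0 : 0 ≤ r) (hr1 : r ≤ 1) : y ^ r - x ^ r ≤ (y - x) ^ r := by
  have := rpow_add_le' (a := y - x) (b := x) (by linarith) hx hr0 hr1
  have hyy : y - x + x = y := by ring
  rw [hyy] at this
  linarith

-- ψ t = t log t - t
private lemma psi_upper {x y : ℝ} (hx : 0 ≤ x) (hxy : x ≤ y) :
    (y * Real.log y - y) - (x * Real.log x - x) ≤ (y - x) * Real.log y := by
  rcases eq_or_lt_of_le (hx.trans hxy) with hy0 | hy0
  · -- y = 0 hence x = 0
    have : x = 0 := le_antisymm (hxy.trans hy0.ge) hx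
    simp [this, ← hy0]
  set u : ℝ → ℝ := fun t => t * Real.log y - (t * Real.log t - t) with hu
  have hmono : MonotoneOn u (Set.Icc 0 y) := by
    apply monotoneOn_of_deriv_nonneg (convex_Icc 0 y)
    · exact ((continuous_id.mul continuous_const).sub
        (Real.continuous_mul_log.sub continuous_id)).continuousOn
    · intro t ht
      rw [interior_Icc] at ht
      have ht0 : t ≠ 0 := ne_of_gt ht.1
      exact (((hasDerivAt_id t).mul_const (Real.log y)).sub
        ((Real.hasDerivAt_mul_log ht0).sub (hasDerivAt_id t))).differentiableAt.differentiableWithinAt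
    · intro t ht
      rw [interior_Icc] at ht
      have hd : HasDerivAt u (1 * Real.log y - (Real.log t + 1 - 1)) t :=
        (((hasDerivAt_id t).mul_const (Real.log y)).sub
          ((Real.hasDerivAt_mul_log (ne_of_gt ht.1)).sub (hasDerivAt_id t)))
      rw [hd.deriv]
      have := Real.log_le_log ht.1 ht.2.le
      linarith
  have h := hmono (Set.mem_Icc.2 ⟨hx, hxy⟩) (Set.mem_Icc.2 ⟨hx.trans hxy, le_refl y⟩) hxy
  simp only [hu] at h
  nlinarith [h]

private lemma psi_lower {x y r : ℝ} (hr0 : 0 < r) (hr1 : r < 1) (hx : 0 ≤ x) (hxy : x ≤ y) :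
    (x * Real.log x - x) - (y * Real.log y - y) ≤ (y ^ r - x ^ r) / (r * (1 - r)) := by
  have hrr : 0 < r * (1 - r) := by nlinarith
  set c : ℝ := 1 / (r * (1 - r)) with hc
  have hc0 : 0 < c := by positivity
  set v : ℝ → ℝ := fun t => (t * Real.log t - t) + c * t ^ r with hv
  have hmono : MonotoneOn v (Set.Icc 0 y) := by
    apply monotoneOn_of_deriv_nonneg (convex_Icc 0 y)
    · exact ((Real.continuous_mul_log.sub continuous_id).add
        (continuous_const.mul (Real.continuous_rpow_const hr0.le))).continuousOn
    · intro t ht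
      rw [interior_Icc] at ht
      exact (((Real.hasDerivAt_mul_log (ne_of_gt ht.1)).sub (hasDerivAt_id t)).add
        ((Real.hasDerivAt_rpow_const (Or.inl (ne_of_gt ht.1))).const_mul c)).differentiableAt.differentiableWithinAt
    · intro t ht
      rw [interior_Icc] at ht
      have hd : HasDerivAt v ((Real.log t + 1 - 1) + c * (r * t ^ (r - 1))) t :=
        ((Real.hasDerivAt_mul_log (ne_of_gt ht.1)).sub (hasDerivAt_id t)).add
          ((Real.hasDerivAt_rpow_const (Or.inl (ne_of_gt ht.1))).const_mul c)
      rw [hd.deriv]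
      have hlog : -(t ^ (-(1 - r)) / (1 - r)) ≤ Real.log t :=
        neg_rpow_div_le_log ht.1 (by linarith)
      have he : -(1 - r) = r - 1 := by ring
      rw [he] at hlog
      have h1r : (0:ℝ) < 1 - r := by linarith
      have ht1 : 0 < t ^ (r - 1) := Real.rpow_pos_of_pos ht.1 _
      have hc1 : c * (r * (1 - r)) = 1 := by rw [hc]; field_simp
      have hlog2 : -(t ^ (r - 1)) ≤ (1 - r) * Real.log t := by
        have h2 := mul_le_mul_of_nonneg_left hlog h1r.le
        calc -(t ^ (r - 1)) = (1 - r) * -(t ^ (r - 1) / (1 - r)) := by field_simp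
        _ ≤ (1 - r) * Real.log t := h2
      have hkey : c * (r * t ^ (r - 1)) * (1 - r) = t ^ (r - 1) := by
        linear_combination t ^ (r - 1) * hc1
      nlinarith [hlog2, hkey, h1r]
  have h := hmono (Set.mem_Icc.2 ⟨hx, hxy⟩) (Set.mem_Icc.2 ⟨hx.trans hxy, le_refl y⟩) hxy
  simp only [hv, hc] at h ⊢
  rw [div_eq_inv_mul, ← one_div]
  nlinarith [h]

private lemma key_le {r q' : ℝ} (hr0 : 0 < r) (hr1 : r < 1) (hq' : 1 < q')
    {x y : ℝ} (hx : 0 ≤ x) (hxy : x ≤ y) :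
    |x * Real.log x - y * Real.log y| ≤ |x - y| + |x - y| ^ r / (r * (1 - r))
      + (x ^ (q' - 1) + y ^ (q' - 1)) * |x - y| / (q' - 1) := by
  have hy : 0 ≤ y := hx.trans hxy
  have hq1 : (0:ℝ) < q' - 1 := by linarith
  have habs : |x - y| = y - x := by rw [abs_sub_comm]; exact abs_of_nonneg (by linarith)
  rw [habs]
  have hT2 : 0 ≤ (y - x) ^ r / (r * (1 - r)) := by
    apply div_nonneg (Real.rpow_nonneg (by linarith) r); nlinarith
  have hxq : 0 ≤ x ^ (q' - 1) := Real.rpow_nonneg hx _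
  have hyq : 0 ≤ y ^ (q' - 1) := Real.rpow_nonneg hy _
  rw [abs_sub_le_iff]
  constructor
  · -- x log x - y log y ≤ ...
    have h1 := psi_lower hr0 hr1 hx hxy
    have h2 := rpow_sub_le_rpow_sub hx hxy hr0.le hr1.le
    have h3 : (y ^ r - x ^ r) / (r * (1 - r)) ≤ (y - x) ^ r / (r * (1 - r)) :=
      div_le_div_of_nonneg_right h2 (by nlinarith)
    have hT3 : 0 ≤ (x ^ (q' - 1) + y ^ (q' - 1)) * (y - x) / (q' - 1) := by
      apply div_nonneg _ hq1.le
      exact mul_nonneg (by linarith) (by linarith)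
    linarith [h1, h3, hT3, sub_nonneg.2 hxy]
  · -- y log y - x log x ≤ ...
    have h1 := psi_upper hx hxy
    rcases eq_or_lt_of_le hy with hy0 | hy0
    · have hx0 : x = 0 := le_antisymm (hxy.trans hy0.ge) hx
      subst hx0
      rw [← hy0]
      simp [Real.zero_rpow (ne_of_gt hr0)]
    have hlogy : Real.log y ≤ y ^ (q' - 1) / (q' - 1) := log_le_rpow_div hy0 hq1
    have hA : (y - x) * Real.log y ≤ (y - x) * (y ^ (q' - 1) / (q' - 1)) :=
      mul_le_mul_of_nonneg_left hlogy (by linarith)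
    have h3 : 0 ≤ x ^ (q' - 1) * (y - x) / (q' - 1) := by
      apply div_nonneg _ hq1.le; exact mul_nonneg hxq (by linarith)
    have hexp : (y - x) * (y ^ (q' - 1) / (q' - 1)) = y ^ (q' - 1) * (y - x) / (q' - 1) := by
      ring
    have hsplit : (x ^ (q' - 1) + y ^ (q' - 1)) * (y - x) / (q' - 1)
        = x ^ (q' - 1) * (y - x) / (q' - 1) + y ^ (q' - 1) * (y - x) / (q' - 1) := by ring
    linarith [hA, h1, h3, hT2]

private lemma key_ptwise {r q' : ℝ} (hr0 : 0 < r) (hr1 : r < 1) (hq' : 1 < q')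
    {x y : ℝ} (hx : 0 ≤ x) (hy : 0 ≤ y) :
    |x * Real.log x - y * Real.log y| ≤ |x - y| + |x - y| ^ r / (r * (1 - r))
      + (x ^ (q' - 1) + y ^ (q' - 1)) * |x - y| / (q' - 1) := by
  rcases le_total x y with h | h
  · exact key_le hr0 hr1 hq' hx h
  · have := key_le hr0 hr1 hq' hy h
    rw [abs_sub_comm (y * Real.log y), abs_sub_comm y x] at this
    calc |x * Real.log x - y * Real.log y|
        ≤ |x - y| + |x - y| ^ r / (r * (1 - r))
          + (y ^ (q' - 1) + x ^ (q' - 1)) * |x - y| / (q' - 1) := this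
      _ = _ := by ring

private lemma mul_rpow_le_add {a b e : ℝ} (ha : 0 ≤ a) (hb : 0 ≤ b) (he : 1 ≤ e) :
    a * b ^ (e - 1) ≤ a ^ e + b ^ e := by
  have he0 : (0:ℝ) ≤ e - 1 := by linarith
  have hcube : ∀ c : ℝ, 0 ≤ c → c * c ^ (e - 1) = c ^ e := by
    intro c hc
    rcases eq_or_lt_of_le hc with hc0 | hc0
    · rw [← hc0]
      simp [Real.zero_rpow (ne_of_gt (by linarith : (0:ℝ) < e))]
    · nth_rewrite 1 [← Real.rpow_one c]
      rw [← Real.rpow_add hc0]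
      norm_num
  rcases le_total a b with h | h
  · have h1 : a * b ^ (e - 1) ≤ b * b ^ (e - 1) :=
      mul_le_mul_of_nonneg_right h (Real.rpow_nonneg hb _)
    rw [hcube b hb] at h1
    have := Real.rpow_nonneg ha e
    linarith
  · have h2 : b ^ (e - 1) ≤ a ^ (e - 1) := Real.rpow_le_rpow hb h he0
    have h1 : a * b ^ (e - 1) ≤ a * a ^ (e - 1) := mul_le_mul_of_nonneg_left h2 ha
    rw [hcube a ha] at h1
    have := Real.rpow_nonneg hb e
    linarith

private lemma split1 {x y d δ p r : ℝ} (hx : 0 ≤ x) (hy : 0 ≤ y) (hd0 : 0 ≤ d)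
    (hdxy : d ≤ x + y) (hδ : 0 < δ) (hp0 : 0 < p) (hpr : p < r) (hr1 : r < 1) :
    d ^ r ≤ δ ^ (r - p) * (x ^ p + y ^ p) + δ ^ (r - 1) * d := by
  have hdp : d ^ p ≤ x ^ p + y ^ p := by
    calc d ^ p ≤ (x + y) ^ p := Real.rpow_le_rpow hd0 hdxy hp0.le
    _ ≤ x ^ p + y ^ p := rpow_add_le' hx hy hp0.le (by linarith)
  rcases eq_or_lt_of_le hd0 with hd | hd
  · rw [← hd, Real.zero_rpow (ne_of_gt (by linarith : (0:ℝ) < r)), mul_zero, add_zero]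
    positivity
  rcases le_total d δ with h | h
  · have e1 : d ^ r = d ^ (r - p) * d ^ p := by
      rw [← Real.rpow_add hd]; ring_nf
    have h1 : d ^ (r - p) ≤ δ ^ (r - p) := Real.rpow_le_rpow hd0 h (by linarith)
    have h2 : d ^ (r - p) * d ^ p ≤ δ ^ (r - p) * (x ^ p + y ^ p) :=
      mul_le_mul h1 hdp (Real.rpow_nonneg hd0 p) (Real.rpow_nonneg hδ.le _)
    have h3 : 0 ≤ δ ^ (r - 1) * d := by positivity
    linarith [e1 ▸ h2]
  · have e1 : d ^ r = d ^ (r - 1) * d := by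
      nth_rewrite 3 [← Real.rpow_one d]
      rw [← Real.rpow_add hd]; ring_nf
    have h1 : d ^ (r - 1) ≤ δ ^ (r - 1) :=
      (Real.rpow_le_rpow_iff_of_neg hd hδ (by linarith)).2 h
    have h2 : d ^ (r - 1) * d ≤ δ ^ (r - 1) * d := mul_le_mul_of_nonneg_right h1 hd0
    have h3 : 0 ≤ δ ^ (r - p) * (x ^ p + y ^ p) := by positivity
    linarith [e1 ▸ h2]

private lemma split2 {x y g d M q q' : ℝ} (hx : 0 ≤ x) (hy : 0 ≤ y)
    (hgor : g = x ∨ g = y) (hd0 : 0 ≤ d) (hdxy : d ≤ x + y) (hM : 0 < M)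
    (hq' : 1 < q') (hq'q : q' < q) :
    g ^ (q' - 1) * d ≤ M ^ (q' - 1) * d + 3 * M ^ (q' - q) * (x ^ q + y ^ q) := by
  have hq : 1 < q := by linarith
  have hg0 : 0 ≤ g := by rcases hgor with h | h <;> subst h <;> assumption
  have hgq : g ^ q ≤ x ^ q + y ^ q := by
    rcases hgor with h | h <;> subst h
    · linarith [Real.rpow_nonneg hy q]
    · linarith [Real.rpow_nonneg hx q]
  rcases le_total g M with h | h
  · have h1 : g ^ (q' - 1) ≤ M ^ (q' - 1) := Real.rpow_le_rpow hg0 h (by linarith)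
    have h2 : 0 ≤ 3 * M ^ (q' - q) * (x ^ q + y ^ q) := by positivity
    nlinarith [mul_le_mul_of_nonneg_right h1 hd0]
  · have hg : 0 < g := lt_of_lt_of_le hM h
    have e1 : g ^ (q' - 1) = g ^ (q - 1) * g ^ (q' - q) := by
      rw [← Real.rpow_add hg]; ring_nf
    have h1 : g ^ (q' - q) ≤ M ^ (q' - q) :=
      (Real.rpow_le_rpow_iff_of_neg hg hM (by linarith)).2 h
    have h2 : g ^ (q - 1) * d ≤ 3 * (x ^ q + y ^ q) := by
      have hx1 : x * g ^ (q - 1) ≤ x ^ q + g ^ q := mul_rpow_le_add hx hg0 hq.le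
      have hy1 : y * g ^ (q - 1) ≤ y ^ q + g ^ q := mul_rpow_le_add hy hg0 hq.le
      have hd1 : g ^ (q - 1) * d ≤ g ^ (q - 1) * (x + y) :=
        mul_le_mul_of_nonneg_left hdxy (Real.rpow_nonneg hg0 _)
      nlinarith
    have h3 : g ^ (q - 1) * g ^ (q' - q) * d = g ^ (q' - q) * (g ^ (q - 1) * d) := by ring
    have h4 : g ^ (q' - q) * (g ^ (q - 1) * d) ≤ M ^ (q' - q) * (3 * (x ^ q + y ^ q)) :=
      mul_le_mul h1 h2 (by positivity) (by positivity)
    have h5 : 0 ≤ M ^ (q' - 1) * d := by positivity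
    rw [e1]
    nlinarith

private lemma master {p q r q' : ℝ} (hp0 : 0 < p) (hpr : p < r) (hr1 : r < 1)
    (hq' : 1 < q') (hq'q : q' < q) {x y δ M : ℝ} (hx : 0 ≤ x) (hy : 0 ≤ y)
    (hδ : 0 < δ) (hM : 0 < M) :
    |x * Real.log x - y * Real.log y| ≤
      (1 + δ ^ (r - 1) / (r * (1 - r)) + 2 * M ^ (q' - 1) / (q' - 1)) * |x - y|
      + (δ ^ (r - p) / (r * (1 - r))) * (x ^ p + y ^ p)
      + (6 * M ^ (q' - q) / (q' - 1)) * (x ^ q + y ^ q) := by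
  have hr0 : 0 < r := hp0.trans hpr
  have hrr : (0:ℝ) < r * (1 - r) := by nlinarith
  have hq1 : (0:ℝ) < q' - 1 := by linarith
  set d := |x - y| with hdd
  have hd0 : 0 ≤ d := abs_nonneg _
  have hdxy : d ≤ x + y := abs_le.2 ⟨by linarith, by linarith⟩
  have k := key_ptwise hr0 hr1 hq' hx hy
  have s1 := split1 hx hy hd0 hdxy hδ hp0 hpr hr1
  have s2x := split2 hx hy (Or.inl rfl) hd0 hdxy hM hq' hq'q
  have s2y := split2 hx hy (Or.inr rfl) hd0 hdxy hM hq' hq'q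
  calc |x * Real.log x - y * Real.log y|
      ≤ d + d ^ r / (r * (1 - r)) + (x ^ (q' - 1) + y ^ (q' - 1)) * d / (q' - 1) := k
    _ ≤ d + (δ ^ (r - p) * (x ^ p + y ^ p) + δ ^ (r - 1) * d) / (r * (1 - r))
        + ((M ^ (q' - 1) * d + 3 * M ^ (q' - q) * (x ^ q + y ^ q))
          + (M ^ (q' - 1) * d + 3 * M ^ (q' - q) * (x ^ q + y ^ q))) / (q' - 1) := by
        have hmid := div_le_div_of_nonneg_right s1 hrr.le
        have hlast : (x ^ (q' - 1) + y ^ (q' - 1)) * d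
            ≤ (M ^ (q' - 1) * d + 3 * M ^ (q' - q) * (x ^ q + y ^ q))
              + (M ^ (q' - 1) * d + 3 * M ^ (q' - q) * (x ^ q + y ^ q)) := by
          have : (x ^ (q' - 1) + y ^ (q' - 1)) * d = x ^ (q' - 1) * d + y ^ (q' - 1) * d := by
            ring
          rw [this]; linarith
        have hlast2 := div_le_div_of_nonneg_right hlast hq1.le
        linarith
    _ = (1 + δ ^ (r - 1) / (r * (1 - r)) + 2 * M ^ (q' - 1) / (q' - 1)) * d
        + (δ ^ (r - p) / (r * (1 - r))) * (x ^ p + y ^ p)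
        + (6 * M ^ (q' - q) / (q' - 1)) * (x ^ q + y ^ q) := by ring

theorem stmt15 {Ω : Type*} [MeasurableSpace Ω] (μ : Measure Ω)
    (ρseq : ℕ → Ω → ℝ) (ρ : Ω → ℝ) (p q A : ℝ)
    (hp0 : 0 < p) (hp1 : p < 1) (hq : 1 < q)
    (hρn0 : ∀ n x, 0 ≤ ρseq n x) (hρ0 : ∀ x, 0 ≤ ρ x)
    (hρn_int : ∀ n, Integrable (ρseq n) μ) (hρ_int : Integrable ρ μ)
    (hρn_norm : ∀ n, ∫ x, ρseq n x ∂μ = 1) (hρ_norm : ∫ x, ρ x ∂μ = 1)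
    (hL1 : Tendsto (fun n => ∫ x, |ρseq n x - ρ x| ∂μ) atTop (nhds 0))
    (hintnp : ∀ n, Integrable (fun x => ρseq n x ^ p) μ)
    (hintnq : ∀ n, Integrable (fun x => ρseq n x ^ q) μ)
    (hintp : Integrable (fun x => ρ x ^ p) μ)
    (hintq : Integrable (fun x => ρ x ^ q) μ)
    (hAnp : ∀ n, ∫ x, ρseq n x ^ p ∂μ ≤ A)
    (hAnq : ∀ n, ∫ x, ρseq n x ^ q ∂μ ≤ A)
    (hAp : ∫ x, ρ x ^ p ∂μ ≤ A)
    (hAq : ∫ x, ρ x ^ q ∂μ ≤ A) :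
    Tendsto (fun n => -∫ x, ρseq n x * Real.log (ρseq n x) ∂μ) atTop
      (nhds (-∫ x, ρ x * Real.log (ρ x) ∂μ)) := by
  set r : ℝ := (p + 1) / 2 with hr
  set q' : ℝ := (q + 1) / 2 with hq'def
  have hpr : p < r := by rw [hr]; linarith
  have hr1 : r < 1 := by rw [hr]; linarith
  have hr0 : 0 < r := hp0.trans hpr
  have hq'1 : 1 < q' := by rw [hq'def]; linarith
  have hq'q : q' < q := by rw [hq'def]; linarith
  have hrr : (0:ℝ) < r * (1 - r) := by nlinarith
  have hq1 : (0:ℝ) < q' - 1 := by linarith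
  -- pointwise bound for integrability
  have habs : ∀ t : ℝ, 0 ≤ t → |t * Real.log t| ≤
      (1 + 1 / (r * (1 - r)) + 2 * 1 / (q' - 1)) * t
      + (1 / (r * (1 - r))) * t ^ p + (6 * 1 / (q' - 1)) * t ^ q := by
    intro t ht
    have h := master hp0 hpr hr1 hq'1 hq'q ht (le_refl (0:ℝ)) one_pos one_pos
    simp only [Real.log_zero, mul_zero, sub_zero, Real.one_rpow,
      Real.zero_rpow (ne_of_gt hp0), Real.zero_rpow (ne_of_gt (by linarith : (0:ℝ) < q)),
      add_zero, abs_of_nonneg ht] at h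
    linarith
  have hint_φ : ∀ f : Ω → ℝ, (∀ x, 0 ≤ f x) → Integrable f μ →
      Integrable (fun x => f x ^ p) μ → Integrable (fun x => f x ^ q) μ →
      Integrable (fun x => f x * Real.log (f x)) μ := by
    intro f hf0 h1 h2 h3
    apply Integrable.mono'
      (((h1.const_mul (1 + 1 / (r * (1 - r)) + 2 * 1 / (q' - 1))).add
        (h2.const_mul (1 / (r * (1 - r))))).add (h3.const_mul (6 * 1 / (q' - 1))))
      (Real.continuous_mul_log.comp_aestronglyMeasurable h1.aestronglyMeasurable)
    filter_upwards with x
    simp only [Pi.add_apply, Real.norm_eq_abs]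
    linarith [habs (f x) (hf0 x)]
  have hφn : ∀ n, Integrable (fun x => ρseq n x * Real.log (ρseq n x)) μ :=
    fun n => hint_φ _ (hρn0 n) (hρn_int n) (hintnp n) (hintnq n)
  have hφ : Integrable (fun x => ρ x * Real.log (ρ x)) μ :=
    hint_φ _ hρ0 hρ_int hintp hintq
  have hA0 : 0 ≤ A :=
    le_trans (integral_nonneg fun x => Real.rpow_nonneg (hρ0 x) p) hAp
  -- core estimate
  have core : ∀ (n : ℕ) (δ M : ℝ), 0 < δ → 0 < M →
      |(∫ x, ρseq n x * Real.log (ρseq n x) ∂μ) - ∫ x, ρ x * Real.log (ρ x) ∂μ| ≤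
        (1 + δ ^ (r - 1) / (r * (1 - r)) + 2 * M ^ (q' - 1) / (q' - 1))
          * (∫ x, |ρseq n x - ρ x| ∂μ)
        + (δ ^ (r - p) / (r * (1 - r))) * (2 * A)
        + (6 * M ^ (q' - q) / (q' - 1)) * (2 * A) := by
    intro n δ M hδ hM
    set K1 : ℝ := 1 + δ ^ (r - 1) / (r * (1 - r)) + 2 * M ^ (q' - 1) / (q' - 1) with hK1
    set K2 : ℝ := δ ^ (r - p) / (r * (1 - r)) with hK2
    set K3 : ℝ := 6 * M ^ (q' - q) / (q' - 1) with hK3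
    have hK1p : 0 ≤ K1 := by rw [hK1]; positivity
    have hK2p : 0 ≤ K2 := by rw [hK2]; positivity
    have hK3p : 0 ≤ K3 := by rw [hK3]; positivity
    have intF : Integrable (fun x => ρseq n x - ρ x) μ := (hρn_int n).sub hρ_int
    have intAbs : Integrable (fun x => |ρseq n x - ρ x|) μ := intF.abs
    have i1 : Integrable (fun x => K1 * |ρseq n x - ρ x|) μ := intAbs.const_mul K1
    have i2 : Integrable (fun x => K2 * (ρseq n x ^ p + ρ x ^ p)) μ :=
      ((hintnp n).add hintp).const_mul K2
    have i3 : Integrable (fun x => K3 * (ρseq n x ^ q + ρ x ^ q)) μ :=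
      ((hintnq n).add hintq).const_mul K3
    have i12 : Integrable (fun x => K1 * |ρseq n x - ρ x|
        + K2 * (ρseq n x ^ p + ρ x ^ p)) μ := i1.add i2
    have ig : Integrable (fun x => K1 * |ρseq n x - ρ x|
        + K2 * (ρseq n x ^ p + ρ x ^ p) + K3 * (ρseq n x ^ q + ρ x ^ q)) μ := i12.add i3
    have hsub : Integrable
        (fun x => ρseq n x * Real.log (ρseq n x) - ρ x * Real.log (ρ x)) μ :=
      (hφn n).sub hφ
    rw [← integral_sub (hφn n) hφ]
    calc |∫ x, (ρseq n x * Real.log (ρseq n x) - ρ x * Real.log (ρ x)) ∂μ|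
        ≤ ∫ x, |ρseq n x * Real.log (ρseq n x) - ρ x * Real.log (ρ x)| ∂μ := by
          simpa [Real.norm_eq_abs] using
            norm_integral_le_integral_norm
              (fun x => ρseq n x * Real.log (ρseq n x) - ρ x * Real.log (ρ x)) (μ := μ)
      _ ≤ ∫ x, (K1 * |ρseq n x - ρ x| + K2 * (ρseq n x ^ p + ρ x ^ p)
            + K3 * (ρseq n x ^ q + ρ x ^ q)) ∂μ := by
          apply integral_mono hsub.abs ig
          intro x
          have hm := master hp0 hpr hr1 hq'1 hq'q (hρn0 n x) (hρ0 x) hδ hM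
          dsimp only
          rw [hK1, hK2, hK3]
          linarith [hm]
      _ = K1 * (∫ x, |ρseq n x - ρ x| ∂μ)
            + K2 * ((∫ x, ρseq n x ^ p ∂μ) + ∫ x, ρ x ^ p ∂μ)
            + K3 * ((∫ x, ρseq n x ^ q ∂μ) + ∫ x, ρ x ^ q ∂μ) := by
          rw [integral_add i12 i3, integral_add i1 i2,
            integral_const_mul, integral_const_mul, integral_const_mul,
            integral_add (hintnp n) hintp, integral_add (hintnq n) hintq]
      _ ≤ K1 * (∫ x, |ρseq n x - ρ x| ∂μ) + K2 * (2 * A) + K3 * (2 * A) := by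
          have h2 : (∫ x, ρseq n x ^ p ∂μ) + ∫ x, ρ x ^ p ∂μ ≤ 2 * A := by
            linarith [hAnp n, hAp]
          have h3 : (∫ x, ρseq n x ^ q ∂μ) + ∫ x, ρ x ^ q ∂μ ≤ 2 * A := by
            linarith [hAnq n, hAq]
          have := mul_le_mul_of_nonneg_left h2 hK2p
          have := mul_le_mul_of_nonneg_left h3 hK3p
          linarith
  -- convergence
  have main : Tendsto (fun n => ∫ x, ρseq n x * Real.log (ρseq n x) ∂μ) atTop
      (nhds (∫ x, ρ x * Real.log (ρ x) ∂μ)) := by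
    rw [Metric.tendsto_atTop]
    intro ε hε
    set B : ℝ := A + 1 with hB
    have hB0 : 0 < B := by linarith
    set c2 : ℝ := ε * (r * (1 - r)) / (8 * B) with hc2
    have hc20 : 0 < c2 := by rw [hc2]; positivity
    set δ : ℝ := c2 ^ (r - p)⁻¹ with hδdef
    have hδ0 : 0 < δ := Real.rpow_pos_of_pos hc20 _
    have hδpow : δ ^ (r - p) = c2 := Real.rpow_inv_rpow hc20.le (by linarith : r - p ≠ 0)
    set c3 : ℝ := ε * (q' - 1) / (48 * B) with hc3
    have hc30 : 0 < c3 := by rw [hc3]; positivity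
    set M : ℝ := c3 ^ (q' - q)⁻¹ with hMdef
    have hM0 : 0 < M := Real.rpow_pos_of_pos hc30 _
    have hMpow : M ^ (q' - q) = c3 :=
      Real.rpow_inv_rpow hc30.le (by linarith : q' - q ≠ 0)
    set K1 : ℝ := 1 + δ ^ (r - 1) / (r * (1 - r)) + 2 * M ^ (q' - 1) / (q' - 1) with hK1
    have hK1p : 0 < K1 := by
      rw [hK1]
      have : 0 ≤ δ ^ (r - 1) / (r * (1 - r)) := by positivity
      have : 0 ≤ 2 * M ^ (q' - 1) / (q' - 1) := by positivity
      linarith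
    have hterm2 : (δ ^ (r - p) / (r * (1 - r))) * (2 * A) ≤ ε / 4 := by
      rw [hδpow, hc2]
      have hAB : 2 * A ≤ 2 * B := by linarith
      calc ε * (r * (1 - r)) / (8 * B) / (r * (1 - r)) * (2 * A)
          ≤ ε * (r * (1 - r)) / (8 * B) / (r * (1 - r)) * (2 * B) := by
            apply mul_le_mul_of_nonneg_left hAB
            positivity
        _ = ε / 4 := by
          field_simp
          rw [mul_assoc, mul_div_right_comm, div_self (sub_pos.2 hr1).ne', one_mul]
          norm_num
    have hterm3 : (6 * M ^ (q' - q) / (q' - 1)) * (2 * A) ≤ ε / 4 := by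
      rw [hMpow, hc3]
      have hAB : 2 * A ≤ 2 * B := by linarith
      calc 6 * (ε * (q' - 1) / (48 * B)) / (q' - 1) * (2 * A)
          ≤ 6 * (ε * (q' - 1) / (48 * B)) / (q' - 1) * (2 * B) := by
            apply mul_le_mul_of_nonneg_left hAB
            positivity
        _ = ε / 4 := by field_simp; ring
    have hev : ∀ᶠ n in atTop, |∫ x, |ρseq n x - ρ x| ∂μ| < ε / (4 * K1) := by
      have := Metric.tendsto_atTop.1 hL1 (ε / (4 * K1)) (by positivity)
      obtain ⟨N, hN⟩ := this
      refine eventually_atTop.2 ⟨N, fun n hn => ?_⟩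
      simpa [Real.dist_eq] using hN n hn
    rw [← eventually_atTop]
    filter_upwards [hev] with n hn
    have hE : K1 * (∫ x, |ρseq n x - ρ x| ∂μ) < ε / 4 := by
      have h1 : (∫ x, |ρseq n x - ρ x| ∂μ) < ε / (4 * K1) :=
        lt_of_le_of_lt (le_abs_self _) hn
      have := mul_lt_mul_of_pos_left h1 hK1p
      calc K1 * (∫ x, |ρseq n x - ρ x| ∂μ) < K1 * (ε / (4 * K1)) := this
        _ = ε / 4 := by field_simp
    have hc := core n δ M hδ0 hM0
    rw [Real.dist_eq]
    calc |(∫ x, ρseq n x * Real.log (ρseq n x) ∂μ) - ∫ x, ρ x * Real.log (ρ x) ∂μ|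
        ≤ K1 * (∫ x, |ρseq n x - ρ x| ∂μ)
          + (δ ^ (r - p) / (r * (1 - r))) * (2 * A)
          + (6 * M ^ (q' - q) / (q' - 1)) * (2 * A) := hc
      _ < ε := by linarith
  exact main.neg
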